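/- If a connected graph G is clique convergent, then its universal triangular cover G̃ is clique convergent. -/

import Mathlib

open SimpleGraph

/-- A maximal clique: a clique not properly contained in any other clique. -/
def IsMaxClique {V : Type*} (G : SimpleGraph V) (s : Set V) : Prop :=
  G.IsClique s ∧ ∀ t : Set V, G.IsClique t → s ⊆ t → t = s

/-- Vertices of the clique graph: the (maximal) cliques of `G`. -/
abbrev CliqueVert {V : Type*} (G : SimpleGraph V) := {s : Set V // IsMaxClique G s}

/-- The clique graph `kG`: cliques of `G`, two distinct cliques adjacent iff they intersect. -/
def cliqueGraph {V : Type*} (G : SimpleGraph V) : SimpleGraph (CliqueVert G) where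
  Adj Q R := Q ≠ R ∧ (Q.1 ∩ R.1).Nonempty
  symm := by
    constructor
    rintro Q R ⟨hne, x, hx1, hx2⟩
    exact ⟨hne.symm, x, hx2, hx1⟩
  loopless := by constructor; rintro Q ⟨hne, -⟩; exact hne rfl

/-- The closed neighbourhood of a vertex. -/
def closedNbhd {V : Type*} (G : SimpleGraph V) (v : V) : Set V := insert v (G.neighborSet v)

/-- A triangular covering map: a graph homomorphism between connected graphs whose
restriction to each closed neighbourhood is an isomorphism onto the closed
neighbourhood of the image vertex. -/
structure IsTriangularCover {V' V : Type*} {G' : SimpleGraph V'} {G : SimpleGraph V}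
    (p : G' →g G) : Prop where
  connDom : G'.Connected
  connCod : G.Connected
  injOn : ∀ v : V', Set.InjOn p (closedNbhd G' v)
  surjOn : ∀ v : V', Set.SurjOn p (closedNbhd G' v) (closedNbhd G (p v))
  reflectAdj : ∀ v x y : V', x ∈ closedNbhd G' v → y ∈ closedNbhd G' v →
    G.Adj (p x) (p y) → G'.Adj x y

/-- Elementary moves on walks (recorded as lists of vertices): triangle
removal/insertion and dead end removal/insertion. -/
inductive ElemMove {V : Type*} (G : SimpleGraph V) : List V → List V → Prop
  | triRemove (l₁ l₂ : List V) (a b c : V) (h₁ : G.Adj a b) (h₂ : G.Adj b c) (h₃ : G.Adj a c) :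
      ElemMove G (l₁ ++ a :: b :: c :: l₂) (l₁ ++ a :: c :: l₂)
  | triInsert (l₁ l₂ : List V) (a b c : V) (h₁ : G.Adj a b) (h₂ : G.Adj b c) (h₃ : G.Adj a c) :
      ElemMove G (l₁ ++ a :: c :: l₂) (l₁ ++ a :: b :: c :: l₂)
  | deadEndRemove (l₁ l₂ : List V) (a b : V) (h : G.Adj a b) :
      ElemMove G (l₁ ++ a :: b :: a :: l₂) (l₁ ++ a :: l₂)
  | deadEndInsert (l₁ l₂ : List V) (a b : V) (h : G.Adj a b) :
      ElemMove G (l₁ ++ a :: l₂) (l₁ ++ a :: b :: a :: l₂)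

/-- Two walks are homotopic if one can be transformed into the other by a finite
sequence of elementary moves. -/
def Homotopic {V : Type*} (G : SimpleGraph V) : List V → List V → Prop :=
  Relation.ReflTransGen (ElemMove G)

/-- A graph is triangularly simply connected if it is connected and every closed walk
is homotopic to a trivial walk. -/
def TriSimplyConnected {V : Type*} (G : SimpleGraph V) : Prop :=
  G.Connected ∧ ∀ (v : V) (l : List V), (v :: l).Chain' G.Adj →
    (v :: l).getLast (List.cons_ne_nil v l) = v → Homotopic G (v :: l) [v]

universe u

/-- A bundled graph, so that the clique graph operator can be iterated. -/
structure BGraph : Type (u + 1) where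
  carrier : Type u
  graph : SimpleGraph carrier

/-- The clique graph operator on bundled graphs. -/
def kStep : BGraph.{u} → BGraph.{u} := fun B => ⟨CliqueVert B.graph, cliqueGraph B.graph⟩

/-- A graph is clique convergent if two distinct iterated clique graphs are isomorphic. -/
def CliqueConvergent {V : Type u} (G : SimpleGraph V) : Prop :=
  ∃ n m : ℕ, n ≠ m ∧ Nonempty ((kStep^[n] ⟨V, G⟩).graph ≃g (kStep^[m] ⟨V, G⟩).graph)

section Basics

variable {V : Type u} {G : SimpleGraph V}

lemma mem_closedNbhd_self (v : V) : v ∈ closedNbhd G v := Or.inl rfl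

lemma mem_closedNbhd_of_adj {v w : V} (h : G.Adj v w) : w ∈ closedNbhd G v :=
  Or.inr h

lemma closedNbhd_cases {v w : V} (h : w ∈ closedNbhd G v) : w = v ∨ G.Adj v w := h

lemma adj_or_eq_of_isClique {s : Set V} (hs : G.IsClique s) {x y : V}
    (hx : x ∈ s) (hy : y ∈ s) : x = y ∨ G.Adj x y := by
  by_cases h : x = y
  · exact Or.inl h
  · exact Or.inr (hs hx hy h)

lemma isClique_subset_closedNbhd {s : Set V} (hs : G.IsClique s) {v : V} (hv : v ∈ s) :
    s ⊆ closedNbhd G v := by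
  intro x hx
  rcases adj_or_eq_of_isClique hs hv hx with h | h
  · exact h ▸ mem_closedNbhd_self v
  · exact mem_closedNbhd_of_adj h

/-- Zorn: every clique is contained in a maximal clique. -/
lemma exists_maxClique_superset (s : Set V) (hs : G.IsClique s) :
    ∃ t : Set V, IsMaxClique G t ∧ s ⊆ t := by
  obtain ⟨m, hsm, hm⟩ := zorn_subset_nonempty {t : Set V | G.IsClique t}
    (fun c hc hchain _ => by
      refine ⟨⋃₀ c, ?_, fun t ht => Set.subset_sUnion_of_mem ht⟩
      intro x hx y hy hxy
      obtain ⟨tx, htx, hxt⟩ := hx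
      obtain ⟨ty, hty, hyt⟩ := hy
      rcases hchain.total htx hty with h | h
      · exact hc hty (h hxt) hyt hxy
      · exact hc htx hxt (h hyt) hxy) s hs
  exact ⟨m, ⟨hm.1, fun t ht hmt => (hm.2 ht hmt).antisymm hmt⟩, hsm⟩

lemma maxClique_nonempty [Nonempty V] {s : Set V} (hs : IsMaxClique G s) : s.Nonempty := by
  by_contra h
  rw [Set.not_nonempty_iff_eq_empty] at h
  obtain ⟨v⟩ := ‹Nonempty V›
  have : ({v} : Set V) = s := hs.2 {v} (G.isClique_singleton v) (by simp [h])
  simp [h] at this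

lemma cliqueGraph_adj {Q R : CliqueVert G} :
    (cliqueGraph G).Adj Q R ↔ Q ≠ R ∧ (Q.1 ∩ R.1).Nonempty := Iff.rfl

lemma cliqueGraph_adj_of_ne {Q R : CliqueVert G} (hne : Q ≠ R) {x : V}
    (hx : x ∈ Q.1) (hx' : x ∈ R.1) : (cliqueGraph G).Adj Q R :=
  ⟨hne, x, hx, hx'⟩

/-- Two maximal cliques sharing a vertex are equal or adjacent in the clique graph. -/
lemma cliqueGraph_eq_or_adj {Q R : CliqueVert G} {x : V} (hx : x ∈ Q.1) (hx' : x ∈ R.1) :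
    Q = R ∨ (cliqueGraph G).Adj Q R := by
  by_cases h : Q = R
  · exact Or.inl h
  · exact Or.inr ⟨h, x, hx, hx'⟩

end Basics
section Homotopy

variable {V : Type u} {G : SimpleGraph V}

lemma ElemMove.symm' {l l' : List V} (h : ElemMove G l l') : ElemMove G l' l := by
  cases h with
  | triRemove l₁ l₂ a b c h₁ h₂ h₃ => exact ElemMove.triInsert l₁ l₂ a b c h₁ h₂ h₃
  | triInsert l₁ l₂ a b c h₁ h₂ h₃ => exact ElemMove.triRemove l₁ l₂ a b c h₁ h₂ h₃
  | deadEndRemove l₁ l₂ a b h => exact ElemMove.deadEndInsert l₁ l₂ a b h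
  | deadEndInsert l₁ l₂ a b h => exact ElemMove.deadEndRemove l₁ l₂ a b h

lemma ElemMove.context {l l' : List V} (x y : List V) (h : ElemMove G l l') :
    ElemMove G (x ++ l ++ y) (x ++ l' ++ y) := by
  cases h with
  | triRemove l₁ l₂ a b c h₁ h₂ h₃ =>
    simpa [List.append_assoc] using ElemMove.triRemove (x ++ l₁) (l₂ ++ y) a b c h₁ h₂ h₃
  | triInsert l₁ l₂ a b c h₁ h₂ h₃ =>
    simpa [List.append_assoc] using ElemMove.triInsert (x ++ l₁) (l₂ ++ y) a b c h₁ h₂ h₃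
  | deadEndRemove l₁ l₂ a b h =>
    simpa [List.append_assoc] using ElemMove.deadEndRemove (x ++ l₁) (l₂ ++ y) a b h
  | deadEndInsert l₁ l₂ a b h =>
    simpa [List.append_assoc] using ElemMove.deadEndInsert (x ++ l₁) (l₂ ++ y) a b h

namespace Homotopic

lemma refl (l : List V) : Homotopic G l l := Relation.ReflTransGen.refl

lemma of_move {l l' : List V} (h : ElemMove G l l') : Homotopic G l l' :=
  Relation.ReflTransGen.single h

lemma trans {l₁ l₂ l₃ : List V} (h : Homotopic G l₁ l₂) (h' : Homotopic G l₂ l₃) :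
    Homotopic G l₁ l₃ := Relation.ReflTransGen.trans h h'

lemma symm {l l' : List V} (h : Homotopic G l l') : Homotopic G l' l := by
  haveI : Std.Symm (ElemMove G) := ⟨fun _ _ hm => hm.symm'⟩
  exact Relation.ReflTransGen.symmetric.symm _ _ h

lemma context {l l' : List V} (x y : List V) (h : Homotopic G l l') :
    Homotopic G (x ++ l ++ y) (x ++ l' ++ y) := by
  induction h with
  | refl => exact Homotopic.refl _
  | tail _ hm ih => exact ih.trans (of_move (hm.context x y))

end Homotopic

lemma ElemMove.head?_eq {l l' : List V} (h : ElemMove G l l') : l.head? = l'.head? := by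
  cases h with
  | triRemove l₁ l₂ a b c h₁ h₂ h₃ => cases l₁ <;> simp
  | triInsert l₁ l₂ a b c h₁ h₂ h₃ => cases l₁ <;> simp
  | deadEndRemove l₁ l₂ a b h => cases l₁ <;> simp
  | deadEndInsert l₁ l₂ a b h => cases l₁ <;> simp

lemma ElemMove.getLast?_eq {l l' : List V} (h : ElemMove G l l') : l.getLast? = l'.getLast? := by
  cases h <;> simp [List.getLast?_append, List.getLast?_cons_cons]

lemma Homotopic.head?_eq {l l' : List V} (h : Homotopic G l l') : l.head? = l'.head? := by
  induction h with
  | refl => rfl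
  | tail _ hm ih => exact ih.trans hm.head?_eq

lemma Homotopic.getLast?_eq {l l' : List V} (h : Homotopic G l l') : l.getLast? = l'.getLast? := by
  induction h with
  | refl => rfl
  | tail _ hm ih => exact ih.trans hm.getLast?_eq

lemma chain'_glue {R : V → V → Prop} {u v : List V} (hu : u.Chain' R) (hv : v.Chain' R)
    (h : v.head? = u.getLast?) : (u ++ v.tail).Chain' R := by
  rw [List.Chain', List.isChain_append]
  refine ⟨hu, hv.tail, ?_⟩
  intro x hx y hy
  cases v with
  | nil => simp at hy
  | cons z t =>
    simp only [List.head?_cons] at h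
    rw [← h] at hx
    have hz : x = z := by simpa using hx.symm
    cases t with
    | nil => simp at hy
    | cons y' t' =>
      simp only [List.tail_cons, List.head?_cons, Option.mem_def, Option.some.injEq] at hy
      have := (List.isChain_cons_cons.mp hv).1
      rw [hz, ← hy]
      exact this

lemma ElemMove.chain' {l l' : List V} (h : ElemMove G l l') (hc : l.Chain' G.Adj) :
    l'.Chain' G.Adj := by
  cases h with
  | triRemove l₁ l₂ a b c h₁ h₂ h₃ =>
    rw [List.Chain', List.isChain_append] at hc ⊢
    obtain ⟨hc1, hc2, hc3⟩ := hc
    refine ⟨hc1, ?_, ?_⟩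
    · rw [List.isChain_cons_cons]
      exact ⟨h₃, (List.isChain_cons_cons.mp (List.isChain_cons_cons.mp hc2).2).2⟩
    · intro x hx y hy; exact hc3 x hx y (by simpa using hy)
  | triInsert l₁ l₂ a b c h₁ h₂ h₃ =>
    rw [List.Chain', List.isChain_append] at hc ⊢
    obtain ⟨hc1, hc2, hc3⟩ := hc
    refine ⟨hc1, ?_, ?_⟩
    · rw [List.isChain_cons_cons]
      exact ⟨h₁, List.isChain_cons_cons.mpr ⟨h₂, (List.isChain_cons_cons.mp hc2).2⟩⟩
    · intro x hx y hy; exact hc3 x hx y (by simpa using hy)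
  | deadEndRemove l₁ l₂ a b h =>
    rw [List.Chain', List.isChain_append] at hc ⊢
    obtain ⟨hc1, hc2, hc3⟩ := hc
    refine ⟨hc1, ?_, ?_⟩
    · exact (List.isChain_cons_cons.mp (List.isChain_cons_cons.mp hc2).2).2
    · intro x hx y hy; exact hc3 x hx y (by simpa using hy)
  | deadEndInsert l₁ l₂ a b h =>
    rw [List.Chain', List.isChain_append] at hc ⊢
    obtain ⟨hc1, hc2, hc3⟩ := hc
    refine ⟨hc1, ?_, ?_⟩
    · exact List.isChain_cons_cons.mpr ⟨h, List.isChain_cons_cons.mpr ⟨h.symm, hc2⟩⟩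
    · intro x hx y hy; exact hc3 x hx y (by simpa using hy)

lemma Homotopic.chain' {l l' : List V} (h : Homotopic G l l') (hc : l.Chain' G.Adj) :
    l'.Chain' G.Adj := by
  induction h with
  | refl => exact hc
  | tail _ hm ih => exact hm.chain' ih

end Homotopy
section WalkAlgebra

variable {V : Type u} {G : SimpleGraph V}

lemma chain'_reverse_adj {l : List V} (h : l.Chain' G.Adj) : l.reverse.Chain' G.Adj := by
  rw [List.Chain', List.isChain_reverse]
  exact h.imp (fun a b hab => hab.symm)

/-- A walk followed by its own reverse is null-homotopic. -/
lemma homotopic_boomerang :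
    ∀ (l : List V) (a : V), (a :: l).Chain' G.Adj →
      Homotopic G ((a :: l) ++ ((a :: l).dropLast).reverse) [a] := by
  intro l
  induction l with
  | nil => intro a _; simp [Homotopic.refl]
  | cons b m ih =>
    intro a hc
    have hab : G.Adj a b := (List.isChain_cons_cons.mp hc).1
    have e : (a :: b :: m) ++ ((a :: b :: m).dropLast).reverse
        = [a] ++ ((b :: m) ++ ((b :: m).dropLast).reverse) ++ [a] := by
      rw [List.dropLast_cons_of_ne_nil (List.cons_ne_nil b m)]
      simp
    rw [e]
    have h1' := (ih b ((List.isChain_cons_cons.mp hc).2)).context [a] [a]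
    refine h1'.trans (Homotopic.of_move ?_)
    simpa using ElemMove.deadEndRemove ([] : List V) ([] : List V) a b hab

lemma homotopic_boomerang' {u : List V} {a : V} (hc : u.Chain' G.Adj)
    (hh : u.head? = some a) : Homotopic G (u ++ (u.dropLast).reverse) [a] := by
  cases u with
  | nil => simp at hh
  | cons x l =>
    have hxa : x = a := by simpa using hh
    subst hxa
    exact homotopic_boomerang l x hc

/-- In a triangularly simply connected graph, any two walks with the same endpoints
are homotopic. -/
lemma homotopic_of_same_ends (hsc : TriSimplyConnected G) {a : V} {l l' : List V}
    (h : (a :: l).Chain' G.Adj) (h' : (a :: l').Chain' G.Adj)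
    (he : (a :: l).getLast? = (a :: l').getLast?) : Homotopic G (a :: l) (a :: l') := by
  cases l' with
  | nil =>
    have hz : (a :: l).getLast (List.cons_ne_nil a l) = a := by
      have := List.getLast?_eq_getLast (l := a :: l) (List.cons_ne_nil a l)
      simp only [this] at he
      simpa using he
    exact hsc.2 a l h hz
  | cons b' m' =>
    set w : List V := a :: l with hw
    set w' : List V := a :: b' :: m' with hw'
    obtain ⟨z, hz⟩ : ∃ z, w.getLast? = some z :=
      ⟨w.getLast (List.cons_ne_nil a l), List.getLast?_eq_getLast _⟩
    have hrevh : w'.reverse.head? = some z := by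
      rw [List.head?_reverse, ← he, hz]
    have hrevchain : w'.reverse.Chain' G.Adj := chain'_reverse_adj h'
    -- the boomerang at the far end
    have HB : Homotopic G (w'.reverse ++ (w'.reverse.dropLast).reverse) [z] :=
      homotopic_boomerang' hrevchain hrevh
    have htailrev : (w'.reverse.dropLast).reverse = w'.tail := by
      rw [← List.tail_reverse, List.reverse_reverse]
    rw [htailrev] at HB
    -- w is homotopic to w followed by the boomerang
    have hD : w.dropLast ++ [z] = w := by
      have := List.dropLast_append_getLast (l := w) (by simp [hw])
      rwa [(by rw [List.getLast?_eq_getLast (l := w) (by simp [hw])] at hz; exact Option.some_injective _ hz :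
        w.getLast (by simp [hw]) = z)] at this
    have H2 : Homotopic G w (w.dropLast ++ (w'.reverse ++ w'.tail)) := by
      have := (HB.symm).context w.dropLast []
      simpa [hD] using this
    -- regroup: w.dropLast ++ (rev w' ++ tail w') = C ++ tail w' with C := w ++ (rev w').tail
    obtain ⟨tt, htt⟩ : ∃ tt, w'.reverse = z :: tt := by
      cases hrw : w'.reverse with
      | nil => rw [hrw] at hrevh; simp at hrevh
      | cons y yt => rw [hrw] at hrevh; exact ⟨yt, by simpa using (by simpa using hrevh : y = z) ▸ rfl⟩
    set C : List V := w ++ tt with hC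
    have hregroup : w.dropLast ++ (w'.reverse ++ w'.tail) = C ++ w'.tail := by
      rw [htt, hC, ← hD]
      simp
    -- C is a closed walk at a
    have hCchain : C.Chain' G.Adj := by
      have := chain'_glue (v := w'.reverse) h hrevchain (by rw [hrevh, hz])
      rwa [htt, List.tail_cons] at this
    have httne : tt ≠ [] := by
      intro hnil
      rw [hnil] at htt
      have : w'.length = 1 := by rw [← List.length_reverse, htt]; rfl
      simp [hw'] at this
    obtain ⟨c, ts, rfl⟩ : ∃ c ts, tt = c :: ts := by
      cases tt with
      | nil => exact absurd rfl httne
      | cons c ts => exact ⟨c, ts, rfl⟩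
    have h1 : w'.reverse.getLast? = some a := by rw [List.getLast?_reverse, hw']; rfl
    rw [htt, List.getLast?_cons_cons] at h1
    have hClast : C.getLast? = some a := by
      rw [hC, List.getLast?_append, h1]; rfl
    have hCform : C = a :: (l ++ c :: ts) := by rw [hC, hw]; rfl
    have hClastg : (a :: (l ++ c :: ts)).getLast (List.cons_ne_nil _ _) = a := by
      have h2 := List.getLast?_eq_getLast (l := a :: (l ++ c :: ts)) (List.cons_ne_nil _ _)
      have h3 : (a :: (l ++ c :: ts)).getLast? = some a := by rw [← hCform]; exact hClast
      exact Option.some_injective _ (h2.symm.trans h3)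
    have H3 : Homotopic G C [a] := by
      rw [hCform]
      exact hsc.2 a (l ++ c :: ts) (hCform ▸ hCchain) hClastg
    have H4 : Homotopic G (C ++ w'.tail) w' := by
      have := H3.context [] w'.tail
      simpa [hw'] using this
    rw [hregroup] at H2
    exact H2.trans H4
end WalkAlgebra
section CliqueGraphBasics

variable {V : Type u} {G : SimpleGraph V}

lemma isClique_pair_of_adj {x y : V} (h : G.Adj x y) : G.IsClique {x, y} := by
  intro a ha b hb hne
  simp only [Set.mem_insert_iff, Set.mem_singleton_iff] at ha hb
  rcases ha with rfl | rfl <;> rcases hb with rfl | rfl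
  · exact absurd rfl hne
  · exact h
  · exact h.symm
  · exact absurd rfl hne

lemma cliqueGraph_nonempty (hG : G.Connected) : Nonempty (CliqueVert G) := by
  obtain ⟨v⟩ := hG.nonempty
  obtain ⟨t, ht, -⟩ := exists_maxClique_superset {v} (G.isClique_singleton v)
  exact ⟨⟨t, ht⟩⟩

lemma cliqueGraph_reachable_of_walk (hG : G.Connected) :
    ∀ {x y : V} (_ : G.Walk x y) (Q R : CliqueVert G), x ∈ Q.1 → y ∈ R.1 →
      (cliqueGraph G).Reachable Q R := by
  intro x y w
  induction w with
  | nil =>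
    intro Q R hx hy
    rcases cliqueGraph_eq_or_adj hx hy with rfl | hadj
    · exact SimpleGraph.Reachable.refl Q
    · exact hadj.reachable
  | @cons x x' y hadj w ih =>
    intro Q R hx hy
    obtain ⟨T, hT, hsub⟩ := exists_maxClique_superset {x, x'} (isClique_pair_of_adj hadj)
    have hxT : x ∈ T := hsub (by simp)
    have hx'T : x' ∈ T := hsub (by simp)
    have h1 : (cliqueGraph G).Reachable Q ⟨T, hT⟩ := by
      rcases cliqueGraph_eq_or_adj hx (show x ∈ (⟨T, hT⟩ : CliqueVert G).1 from hxT) with h | h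
      · exact h ▸ SimpleGraph.Reachable.refl Q
      · exact h.reachable
    exact h1.trans (ih ⟨T, hT⟩ R hx'T hy)

lemma cliqueGraph_connected (hG : G.Connected) : (cliqueGraph G).Connected := by
  have := cliqueGraph_nonempty hG
  rw [SimpleGraph.connected_iff]
  refine ⟨?_, this⟩
  intro Q R
  have : Nonempty V := hG.nonempty
  obtain ⟨x, hx⟩ := maxClique_nonempty Q.2
  obtain ⟨y, hy⟩ := maxClique_nonempty R.2
  obtain ⟨w⟩ := hG.preconnected x y
  exact cliqueGraph_reachable_of_walk hG w Q R hx hy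

/-- Cone contraction: a walk in the clique graph all of whose cliques contain a common
vertex is homotopic to the direct connection between its endpoints. -/
lemma homotopic_cone (x : V) :
    ∀ (n : ℕ) (W : List (CliqueVert G)) (Q Z : CliqueVert G), W.length ≤ n →
      ((Q :: W).Chain' (cliqueGraph G).Adj) → (∀ R ∈ Q :: W, x ∈ R.1) →
      (Q :: W).getLast? = some Z →
      (Q = Z → Homotopic (cliqueGraph G) (Q :: W) [Q]) ∧
      (Q ≠ Z → Homotopic (cliqueGraph G) (Q :: W) [Q, Z]) := by
  intro n
  induction n with
  | zero =>
    intro W Q Z hlen _ _ hlast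
    have : W = [] := List.length_eq_zero_iff.mp (Nat.le_zero.mp hlen)
    subst this
    have : Q = Z := by simpa using hlast
    subst this
    exact ⟨fun _ => Homotopic.refl _, fun h => absurd rfl h⟩
  | succ n ih =>
    intro W Q Z hlen hchain hmem hlast
    cases W with
    | nil =>
      have : Q = Z := by simpa using hlast
      subst this
      exact ⟨fun _ => Homotopic.refl _, fun h => absurd rfl h⟩
    | cons S W₂ =>
      cases W₂ with
      | nil =>
        have hQS : (cliqueGraph G).Adj Q S := (List.isChain_cons_cons.mp hchain).1
        have : S = Z := by simpa using hlast
        subst this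
        refine ⟨fun h => absurd h hQS.ne, fun _ => Homotopic.refl _⟩
      | cons T W' =>
        have hQS : (cliqueGraph G).Adj Q S := (List.isChain_cons_cons.mp hchain).1
        have hrest : (S :: T :: W').Chain' (cliqueGraph G).Adj := (List.isChain_cons_cons.mp hchain).2
        have hST : (cliqueGraph G).Adj S T := (List.isChain_cons_cons.mp hrest).1
        have hTW' : (T :: W').Chain' (cliqueGraph G).Adj := (List.isChain_cons_cons.mp hrest).2
        have hlast' : (T :: W').getLast? = some Z := by
          rw [← List.getLast?_cons_cons, ← List.getLast?_cons_cons]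
          exact hlast
        by_cases hQT : Q = T
        · -- dead end removal
          subst hQT
          have hmove : ElemMove (cliqueGraph G) (Q :: S :: Q :: W') (Q :: W') := by
            simpa using ElemMove.deadEndRemove [] W' Q S hQS
          have hchain' : (Q :: W').Chain' (cliqueGraph G).Adj := hTW'
          have hlen' : W'.length ≤ n := by simp at hlen; omega
          have hmem' : ∀ R ∈ Q :: W', x ∈ R.1 := by
            intro R hR
            rcases List.mem_cons.mp hR with rfl | hR
            · exact hmem R (by simp)
            · exact hmem R (by simp [hR])
          have hlast'' : (Q :: W').getLast? = some Z := by
            cases W' with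
            | nil => simpa using hlast'
            | cons U W'' => rw [List.getLast?_cons_cons]; rw [List.getLast?_cons_cons] at hlast'; exact hlast'
          obtain ⟨c1, c2⟩ := ih W' Q Z hlen' hchain' hmem' hlast''
          exact ⟨fun h => (Homotopic.of_move hmove).trans (c1 h),
                 fun h => (Homotopic.of_move hmove).trans (c2 h)⟩
        · -- triangle removal
          have hQT' : (cliqueGraph G).Adj Q T :=
            ⟨hQT, x, hmem Q (by simp), hmem T (by simp)⟩
          have hmove : ElemMove (cliqueGraph G) (Q :: S :: T :: W') (Q :: T :: W') := by
            simpa using ElemMove.triRemove [] W' Q S T hQS hST hQT'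
          have hchain' : (Q :: T :: W').Chain' (cliqueGraph G).Adj :=
            List.isChain_cons_cons.mpr ⟨hQT', hTW'⟩
          have hlen' : (T :: W').length ≤ n := by simp at hlen ⊢; omega
          have hmem' : ∀ R ∈ Q :: T :: W', x ∈ R.1 := by
            intro R hR
            rcases List.mem_cons.mp hR with rfl | hR
            · exact hmem R (by simp)
            · exact hmem R (by simp [List.mem_cons.mp hR])
          have hlast'' : (Q :: T :: W').getLast? = some Z := by
            rw [List.getLast?_cons_cons]; exact hlast'
          obtain ⟨c1, c2⟩ := ih (T :: W') Q Z hlen' hchain' hmem' hlast''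
          exact ⟨fun h => (Homotopic.of_move hmove).trans (c1 h),
                 fun h => (Homotopic.of_move hmove).trans (c2 h)⟩

lemma homotopic_cone_closed (x : V) (W : List (CliqueVert G)) (Q : CliqueVert G)
    (hchain : (Q :: W).Chain' (cliqueGraph G).Adj) (hmem : ∀ R ∈ Q :: W, x ∈ R.1)
    (hlast : (Q :: W).getLast? = some Q) : Homotopic (cliqueGraph G) (Q :: W) [Q] :=
  (homotopic_cone x W.length W Q Q le_rfl hchain hmem hlast).1 rfl

lemma homotopic_cone_open (x : V) (W : List (CliqueVert G)) (Q Z : CliqueVert G)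
    (hchain : (Q :: W).Chain' (cliqueGraph G).Adj) (hmem : ∀ R ∈ Q :: W, x ∈ R.1)
    (hlast : (Q :: W).getLast? = some Z) (hne : Q ≠ Z) :
    Homotopic (cliqueGraph G) (Q :: W) [Q, Z] :=
  (homotopic_cone x W.length W Q Z le_rfl hchain hmem hlast).2 hne

end CliqueGraphBasics
section CoverClique

variable {V' V : Type u} {G' : SimpleGraph V'} {G : SimpleGraph V}

lemma Hom.adj_map (p : G' →g G) {x y : V'} (h : G'.Adj x y) : G.Adj (p x) (p y) := p.map_rel h

lemma image_isClique (p : G' →g G) {s : Set V'} (hs : G'.IsClique s) :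
    G.IsClique (p '' s) := by
  rintro - ⟨x, hx, rfl⟩ - ⟨y, hy, rfl⟩ hne
  have hxy : x ≠ y := fun h => hne (by rw [h])
  exact p.map_rel (hs hx hy hxy)

lemma image_maxClique (p : G' →g G) (hp : IsTriangularCover p) {s : Set V'}
    (hs : IsMaxClique G' s) : IsMaxClique G (p '' s) := by
  have : Nonempty V' := hp.connDom.nonempty
  obtain ⟨v, hv⟩ := maxClique_nonempty hs
  refine ⟨image_isClique p hs.1, ?_⟩
  intro t ht hst
  have hpv : p v ∈ t := hst ⟨v, hv, rfl⟩
  have htN : t ⊆ closedNbhd G (p v) := isClique_subset_closedNbhd ht hpv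
  set s' : Set V' := closedNbhd G' v ∩ p ⁻¹' t with hs'
  have hs'c : G'.IsClique s' := by
    rintro x ⟨hxN, hxt⟩ y ⟨hyN, hyt⟩ hne
    have hpxy : p x ≠ p y := fun h => hne (hp.injOn v hxN hyN h)
    exact hp.reflectAdj v x y hxN hyN (ht hxt hyt hpxy)
  have hss' : s ⊆ s' := by
    intro z hz
    exact ⟨isClique_subset_closedNbhd hs.1 hv hz, hst ⟨z, hz, rfl⟩⟩
  have hs's : s' = s := hs.2 s' hs'c hss'
  apply Set.Subset.antisymm _ hst
  intro u hu
  obtain ⟨x, hxN, hxu⟩ := hp.surjOn v (htN hu)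
  have hxs' : x ∈ s' := ⟨hxN, by rw [Set.mem_preimage, hxu]; exact hu⟩
  exact ⟨x, hs's ▸ hxs', hxu⟩

variable (p : G' →g G) (hp : IsTriangularCover p)

/-- The induced map on maximal cliques. -/
noncomputable def coverCliqueMap : CliqueVert G' → CliqueVert G :=
  fun Q => ⟨p '' Q.1, image_maxClique p hp Q.2⟩

lemma coverCliqueMap_inj_of_common {Q R : CliqueVert G'} {x : V'}
    (hxQ : x ∈ Q.1) (hxR : x ∈ R.1) (h : coverCliqueMap p hp Q = coverCliqueMap p hp R) :
    Q = R := by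
  have himg : p '' Q.1 = p '' R.1 := congrArg Subtype.val h
  have hQR : Q.1 ⊆ R.1 := by
    intro q hq
    have : p q ∈ p '' R.1 := himg ▸ ⟨q, hq, rfl⟩
    obtain ⟨r, hr, hpr⟩ := this
    have hqN : q ∈ closedNbhd G' x := isClique_subset_closedNbhd Q.2.1 hxQ hq
    have hrN : r ∈ closedNbhd G' x := isClique_subset_closedNbhd R.2.1 hxR hr
    have : r = q := hp.injOn x hrN hqN (by rw [hpr])
    exact this ▸ hr
  exact Subtype.ext ((Q.2.2 R.1 R.2.1 hQR)).symm

lemma coverCliqueMap_mem {Q : CliqueVert G'} {x : V'} (hx : x ∈ Q.1) :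
    p x ∈ (coverCliqueMap p hp Q).1 := ⟨x, hx, rfl⟩

/-- The induced graph homomorphism on clique graphs. -/
noncomputable def coverCliqueHom : cliqueGraph G' →g cliqueGraph G where
  toFun := coverCliqueMap p hp
  map_rel' := by
    rintro Q R ⟨hne, x, hxQ, hxR⟩
    refine ⟨fun h => hne (coverCliqueMap_inj_of_common p hp hxQ hxR h), p x,
      coverCliqueMap_mem p hp hxQ, coverCliqueMap_mem p hp hxR⟩

lemma exists_common_of_mem_closedNbhd [Nonempty V] {Q R : CliqueVert G}
    (h : R ∈ closedNbhd (cliqueGraph G) Q) : ∃ x, x ∈ Q.1 ∧ x ∈ R.1 := by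
  rcases closedNbhd_cases h with rfl | hadj
  · obtain ⟨x, hx⟩ := maxClique_nonempty R.2
    exact ⟨x, hx, hx⟩
  · obtain ⟨-, x, hx1, hx2⟩ := hadj
    exact ⟨x, hx1, hx2⟩

lemma mem_closedNbhd_of_common {Q R : CliqueVert G} {x : V} (hx : x ∈ Q.1) (hx' : x ∈ R.1) :
    R ∈ closedNbhd (cliqueGraph G) Q := by
  rcases cliqueGraph_eq_or_adj hx hx' with h | h
  · exact h ▸ mem_closedNbhd_self Q
  · exact mem_closedNbhd_of_adj h

/-- The induced homomorphism on clique graphs is again a triangular cover. -/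
theorem coverCliqueHom_isCover : IsTriangularCover (coverCliqueHom p hp) := by
  have hV' : Nonempty V' := hp.connDom.nonempty
  constructor
  · exact cliqueGraph_connected hp.connDom
  · exact cliqueGraph_connected hp.connCod
  · -- injOn
    intro Q R hR S hS himg
    obtain ⟨x, hxQ, hxR⟩ := exists_common_of_mem_closedNbhd hR
    obtain ⟨y, hyQ, hyS⟩ := exists_common_of_mem_closedNbhd hS
    have himg' : p '' R.1 = p '' S.1 := congrArg Subtype.val himg
    -- show x ∈ S.1
    have hpx : p x ∈ p '' S.1 := himg' ▸ ⟨x, hxR, rfl⟩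
    obtain ⟨s, hsS, hps⟩ := hpx
    have hsN : s ∈ closedNbhd G' y := isClique_subset_closedNbhd S.2.1 hyS hsS
    have hxN : x ∈ closedNbhd G' y := isClique_subset_closedNbhd Q.2.1 hyQ hxQ
    have hsx : s = x := hp.injOn y hsN hxN (by rw [hps])
    exact coverCliqueMap_inj_of_common p hp hxR (hsx ▸ hsS) himg
  · -- surjOn
    intro Q T hT
    rcases closedNbhd_cases hT with rfl | hadj
    · exact ⟨Q, mem_closedNbhd_self Q, rfl⟩
    · obtain ⟨-, z, hzQ, hzT⟩ := hadj
      obtain ⟨x, hxQ, rfl⟩ := hzQ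
      have hTN : T.1 ⊆ closedNbhd G (p x) := isClique_subset_closedNbhd T.2.1 hzT
      set T' : Set V' := closedNbhd G' x ∩ p ⁻¹' T.1 with hT'
      have hT'c : G'.IsClique T' := by
        rintro a ⟨haN, hat⟩ b ⟨hbN, hbt⟩ hne
        have : p a ≠ p b := fun h => hne (hp.injOn x haN hbN h)
        exact hp.reflectAdj x a b haN hbN (T.2.1 hat hbt this)
      have hxT' : x ∈ T' := ⟨mem_closedNbhd_self x, by rw [Set.mem_preimage]; exact hzT⟩
      have himgT' : p '' T' = T.1 := by
        apply Set.Subset.antisymm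
        · rintro - ⟨a, ⟨-, hat⟩, rfl⟩; exact hat
        · intro t ht
          obtain ⟨a, haN, hpa⟩ := hp.surjOn x (hTN ht)
          exact ⟨a, ⟨haN, by rw [Set.mem_preimage, hpa]; exact ht⟩, hpa⟩
      have hT'max : IsMaxClique G' T' := by
        refine ⟨hT'c, ?_⟩
        intro U hU hTU
        have hxU : x ∈ U := hTU hxT'
        have hUN : U ⊆ closedNbhd G' x := isClique_subset_closedNbhd hU hxU
        have hUc : G.IsClique (p '' U) := image_isClique p hU
        have himgU : p '' U = T.1 := T.2.2 (p '' U) hUc (himgT' ▸ Set.image_mono (f := p) hTU)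
        apply Set.Subset.antisymm _ hTU
        intro u hu
        have : p u ∈ T.1 := himgU ▸ ⟨u, hu, rfl⟩
        exact ⟨hUN hu, this⟩
      refine ⟨⟨T', hT'max⟩, mem_closedNbhd_of_common hxQ hxT', Subtype.ext himgT'⟩
  · -- reflectAdj
    intro Q R S hR hS hadj
    obtain ⟨x, hxQ, hxR⟩ := exists_common_of_mem_closedNbhd hR
    obtain ⟨y, hyQ, hyS⟩ := exists_common_of_mem_closedNbhd hS
    obtain ⟨hne, z, hzR, hzS⟩ := hadj
    have hRS : R ≠ S := fun h => hne (by rw [h])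
    obtain ⟨r, hrR, hpr⟩ := hzR
    obtain ⟨s, hsS, hps⟩ := hzS
    -- find a common vertex of R and S
    suffices h : (R.1 ∩ S.1).Nonempty by exact ⟨hRS, h⟩
    have hrNx : r ∈ closedNbhd G' x := isClique_subset_closedNbhd R.2.1 hxR hrR
    have hsNy : s ∈ closedNbhd G' y := isClique_subset_closedNbhd S.2.1 hyS hsS
    by_cases hxy : x = y
    · subst hxy
      have : r = s := hp.injOn x hrNx hsNy (by rw [hpr, hps])
      exact ⟨r, hrR, this ▸ hsS⟩
    · have hxyadj : G'.Adj x y := Q.2.1 hxQ hyQ hxy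
      have hyNx : y ∈ closedNbhd G' x := mem_closedNbhd_of_adj hxyadj
      have hpyS : p y ∈ p '' S.1 := ⟨y, hyS, rfl⟩
      have hzS' : z ∈ p '' S.1 := ⟨s, hsS, hps⟩
      rcases adj_or_eq_of_isClique (image_isClique p S.2.1) hzS' hpyS with hzy | hzy
      · -- z = p y : then r = y is a common vertex
        have hry : r = y := hp.injOn x hrNx hyNx (by rw [hpr, hzy])
        exact ⟨r, hrR, hry ▸ hyS⟩
      · -- z adjacent to p y : reflect to get r adjacent to y, then r = s
        have hady : G'.Adj r y := hp.reflectAdj x r y hrNx hyNx (by rw [hpr]; exact hzy)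
        have hrNy : r ∈ closedNbhd G' y := mem_closedNbhd_of_adj hady.symm
        have : r = s := hp.injOn y hrNy hsNy (by rw [hpr, hps])
        exact ⟨r, hrR, this ▸ hsS⟩

end CoverClique
section Lifting

variable {VB VK : Type u} {HB : SimpleGraph VB} {HK : SimpleGraph VK}

lemma walk_getLast? {W : Type u} {H : SimpleGraph W} {u v : W} (w : H.Walk u v) :
    w.support.getLast? = some v := by
  induction w with
  | nil => rfl
  | cons h w ih =>
    rw [SimpleGraph.Walk.support_cons, w.support_eq_cons]
    rw [w.support_eq_cons] at ih
    rw [List.getLast?_cons_cons]; exact ih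

lemma map_elemMove {W W' : Type u} {H : SimpleGraph W} {H' : SimpleGraph W'} (f : H →g H')
    {l l' : List W} (h : ElemMove H l l') : ElemMove H' (l.map f) (l'.map f) := by
  cases h with
  | triRemove l₁ l₂ a b c h₁ h₂ h₃ =>
    simpa using ElemMove.triRemove (l₁.map f) (l₂.map f) (f a) (f b) (f c)
      (f.map_rel h₁) (f.map_rel h₂) (f.map_rel h₃)
  | triInsert l₁ l₂ a b c h₁ h₂ h₃ =>
    simpa using ElemMove.triInsert (l₁.map f) (l₂.map f) (f a) (f b) (f c)
      (f.map_rel h₁) (f.map_rel h₂) (f.map_rel h₃)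
  | deadEndRemove l₁ l₂ a b h =>
    simpa using ElemMove.deadEndRemove (l₁.map f) (l₂.map f) (f a) (f b) (f.map_rel h)
  | deadEndInsert l₁ l₂ a b h =>
    simpa using ElemMove.deadEndInsert (l₁.map f) (l₂.map f) (f a) (f b) (f.map_rel h)

lemma map_homotopic {W W' : Type u} {H : SimpleGraph W} {H' : SimpleGraph W'} (f : H →g H')
    {l l' : List W} (h : Homotopic H l l') : Homotopic H' (l.map f) (l'.map f) :=
  Relation.ReflTransGen.lift (List.map f) (fun _ _ hm => map_elemMove f hm) _ _ h

/-- One step of walk lifting through a cover. -/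
noncomputable def liftStep (q : HB →g HK) (b : VB) (k : VK) : VB :=
  letI := Classical.propDecidable (∃ x ∈ closedNbhd HB b, q x = k)
  if h : ∃ x ∈ closedNbhd HB b, q x = k then h.choose else b

/-- Endpoint of the lift of a walk through a cover. -/
noncomputable def liftEnd (q : HB →g HK) (b : VB) (l : List VK) : VB := l.foldl (liftStep q) b

variable {q : HB →g HK}

lemma liftEnd_nil (b : VB) : liftEnd q b [] = b := rfl

lemma liftEnd_append (b : VB) (l l' : List VK) :
    liftEnd q b (l ++ l') = liftEnd q (liftEnd q b l) l' :=
  List.foldl_append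

lemma liftStep_spec (hq : IsTriangularCover q) {b : VB} {k : VK}
    (hk : k ∈ closedNbhd HK (q b)) :
    liftStep q b k ∈ closedNbhd HB b ∧ q (liftStep q b k) = k := by
  have h : ∃ x ∈ closedNbhd HB b, q x = k := hq.surjOn b hk
  rw [liftStep, dif_pos h]
  exact ⟨h.choose_spec.1, h.choose_spec.2⟩

lemma liftStep_unique (hq : IsTriangularCover q) {b x : VB} {k : VK}
    (hx : x ∈ closedNbhd HB b) (hqx : q x = k) : liftStep q b k = x := by
  have h : ∃ y ∈ closedNbhd HB b, q y = k := ⟨x, hx, hqx⟩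
  have hk : k ∈ closedNbhd HK (q b) := by
    rcases closedNbhd_cases hx with rfl | hadj
    · exact hqx ▸ mem_closedNbhd_self _
    · exact hqx ▸ mem_closedNbhd_of_adj (q.map_rel hadj)
  obtain ⟨hmem, hval⟩ := liftStep_spec hq hk
  exact hq.injOn b hmem hx (hval.trans hqx.symm)

lemma liftStep_self (hq : IsTriangularCover q) (b : VB) : liftStep q b (q b) = b :=
  liftStep_unique hq (mem_closedNbhd_self b) rfl

lemma liftStep_adj (hq : IsTriangularCover q) {b : VB} {k : VK} (h : HK.Adj (q b) k) :
    HB.Adj b (liftStep q b k) := by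
  obtain ⟨hmem, hval⟩ := liftStep_spec hq (mem_closedNbhd_of_adj h)
  rcases closedNbhd_cases hmem with heq | hadj
  · refine absurd ?_ h.ne
    rw [← heq]
    exact hval
  · exact hadj


lemma liftEnd_chain_spec (hq : IsTriangularCover q) :
    ∀ (l : List VK) (b : VB) (k : VK), q b = k → (k :: l).Chain' HK.Adj →
      q (liftEnd q b (k :: l)) = (k :: l).getLast (List.cons_ne_nil _ _) := by
  intro l
  induction l with
  | nil =>
    intro b k hqb _
    have e1 : liftStep q b k = b := liftStep_unique hq (mem_closedNbhd_self b) hqb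
    have : liftEnd q b [k] = b := by simp only [liftEnd, List.foldl_cons, List.foldl_nil, e1]
    rw [this]
    simpa using hqb
  | cons k' l' ih =>
    intro b k hqb hc
    have hadj : HK.Adj k k' := (List.isChain_cons_cons.mp hc).1
    have hb' := liftStep_spec hq (b := b) (k := k') (by rw [hqb]; exact mem_closedNbhd_of_adj hadj)
    have e1 : liftStep q b k = b := liftStep_unique hq (mem_closedNbhd_self b) hqb
    have e2 : liftStep q (liftStep q b k') k' = liftStep q b k' :=
      liftStep_unique hq (mem_closedNbhd_self _) hb'.2
    have e : liftEnd q b (k :: k' :: l') = liftEnd q (liftStep q b k') (k' :: l') := by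
      simp only [liftEnd, List.foldl_cons, e1, e2]
    rw [e]
    have := ih (liftStep q b k') k' hb'.2 (List.isChain_cons_cons.mp hc).2
    rw [this]
    rfl

lemma liftEnd_prefix_spec (hq : IsTriangularCover q) {P : List VK} (hP : P ≠ [])
    (hc : P.Chain' HK.Adj) {b : VB} (hb : P.head? = some (q b)) :
    P.getLast? = some (q (liftEnd q b P)) := by
  cases P with
  | nil => exact absurd rfl hP
  | cons k l =>
    have hk : q b = k := by simpa using hb.symm
    rw [liftEnd_chain_spec hq l b k hk hc]
    exact List.getLast?_eq_getLast _

lemma liftEnd_elemMove (hq : IsTriangularCover q) {u u' : List VK} (h : ElemMove HK u u')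
    (hc : u.Chain' HK.Adj) (b : VB) (hb : u.head? = some (q b)) :
    liftEnd q b u = liftEnd q b u' := by
  -- helper facts for the prefix
  have prefixFact : ∀ (l₁ : List VK) (a : VK), (l₁ ++ [a]).Chain' HK.Adj →
      (l₁ ++ [a]).head? = some (q b) → q (liftEnd q b (l₁ ++ [a])) = a := by
    intro l₁ a hc1 hb1
    have := liftEnd_prefix_spec hq (by simp) hc1 hb1
    rw [List.getLast?_append] at this
    simpa using this.symm
  cases h with
  | triRemove l₁ l₂ a c d h₁ h₂ h₃ =>
    have hpre : (l₁ ++ [a]).Chain' HK.Adj ∧ (l₁ ++ [a]).head? = some (q b) := by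
      constructor
      · have : l₁ ++ a :: c :: d :: l₂ = (l₁ ++ [a]) ++ (c :: d :: l₂) := by simp
        rw [this, List.Chain', List.isChain_append] at hc
        exact hc.1
      · rw [List.head?_append] at hb ⊢
        cases l₁ <;> simpa using hb
    set b₁ := liftEnd q b (l₁ ++ [a]) with hb₁
    have hqb₁ : q b₁ = a := prefixFact l₁ a hpre.1 hpre.2
    have hcN : c ∈ closedNbhd HK (q b₁) := by rw [hqb₁]; exact mem_closedNbhd_of_adj h₁
    obtain ⟨hc1mem, hc1val⟩ := liftStep_spec hq hcN
    set c1 := liftStep q b₁ c with hc1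
    have hadjbc : HB.Adj b₁ c1 := liftStep_adj hq (by rw [hqb₁]; exact h₁)
    have hdN : d ∈ closedNbhd HK (q c1) := by rw [hc1val]; exact mem_closedNbhd_of_adj h₂
    obtain ⟨hd1mem, hd1val⟩ := liftStep_spec hq hdN
    set d1 := liftStep q c1 d with hd1
    have hadjd : HB.Adj b₁ d1 := by
      refine hq.reflectAdj c1 b₁ d1 (mem_closedNbhd_of_adj hadjbc.symm) hd1mem ?_
      rw [hqb₁, hd1val]; exact h₃
    have hkey : liftStep q b₁ d = d1 :=
      liftStep_unique hq (mem_closedNbhd_of_adj hadjd) hd1val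
    calc liftEnd q b (l₁ ++ a :: c :: d :: l₂)
        = liftEnd q b₁ (c :: d :: l₂) := by
          rw [hb₁, ← liftEnd_append]; congr 1; simp
      _ = liftEnd q d1 l₂ := by simp [liftEnd, hc1, hd1]
      _ = liftEnd q b₁ (d :: l₂) := by simp [liftEnd, hkey]
      _ = liftEnd q b (l₁ ++ a :: d :: l₂) := by
          rw [hb₁, ← liftEnd_append]; congr 1; simp
  | triInsert l₁ l₂ a c d h₁ h₂ h₃ =>
    have hpre : (l₁ ++ [a]).Chain' HK.Adj ∧ (l₁ ++ [a]).head? = some (q b) := by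
      constructor
      · have : l₁ ++ a :: d :: l₂ = (l₁ ++ [a]) ++ (d :: l₂) := by simp
        rw [this, List.Chain', List.isChain_append] at hc
        exact hc.1
      · rw [List.head?_append] at hb ⊢
        cases l₁ <;> simpa using hb
    set b₁ := liftEnd q b (l₁ ++ [a]) with hb₁
    have hqb₁ : q b₁ = a := prefixFact l₁ a hpre.1 hpre.2
    have hcN : c ∈ closedNbhd HK (q b₁) := by rw [hqb₁]; exact mem_closedNbhd_of_adj h₁
    obtain ⟨hc1mem, hc1val⟩ := liftStep_spec hq hcN
    set c1 := liftStep q b₁ c with hc1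
    have hadjbc : HB.Adj b₁ c1 := liftStep_adj hq (by rw [hqb₁]; exact h₁)
    have hdN : d ∈ closedNbhd HK (q c1) := by rw [hc1val]; exact mem_closedNbhd_of_adj h₂
    obtain ⟨hd1mem, hd1val⟩ := liftStep_spec hq hdN
    set d1 := liftStep q c1 d with hd1
    have hadjd : HB.Adj b₁ d1 := by
      refine hq.reflectAdj c1 b₁ d1 (mem_closedNbhd_of_adj hadjbc.symm) hd1mem ?_
      rw [hqb₁, hd1val]; exact h₃
    have hkey : liftStep q b₁ d = d1 :=
      liftStep_unique hq (mem_closedNbhd_of_adj hadjd) hd1val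
    calc liftEnd q b (l₁ ++ a :: d :: l₂)
        = liftEnd q b₁ (d :: l₂) := by
          rw [hb₁, ← liftEnd_append]; congr 1; simp
      _ = liftEnd q d1 l₂ := by simp [liftEnd, hkey]
      _ = liftEnd q b₁ (c :: d :: l₂) := by simp [liftEnd, hc1, hd1]
      _ = liftEnd q b (l₁ ++ a :: c :: d :: l₂) := by
          rw [hb₁, ← liftEnd_append]; congr 1; simp
  | deadEndRemove l₁ l₂ a c h =>
    have hpre : (l₁ ++ [a]).Chain' HK.Adj ∧ (l₁ ++ [a]).head? = some (q b) := by
      constructor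
      · have : l₁ ++ a :: c :: a :: l₂ = (l₁ ++ [a]) ++ (c :: a :: l₂) := by simp
        rw [this, List.Chain', List.isChain_append] at hc
        exact hc.1
      · rw [List.head?_append] at hb ⊢
        cases l₁ <;> simpa using hb
    set b₁ := liftEnd q b (l₁ ++ [a]) with hb₁
    have hqb₁ : q b₁ = a := prefixFact l₁ a hpre.1 hpre.2
    have hcN : c ∈ closedNbhd HK (q b₁) := by rw [hqb₁]; exact mem_closedNbhd_of_adj h
    obtain ⟨hc1mem, hc1val⟩ := liftStep_spec hq hcN
    set c1 := liftStep q b₁ c with hc1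
    have hadjbc : HB.Adj b₁ c1 := liftStep_adj hq (by rw [hqb₁]; exact h)
    have hkey : liftStep q c1 a = b₁ :=
      liftStep_unique hq (mem_closedNbhd_of_adj hadjbc.symm) hqb₁
    calc liftEnd q b (l₁ ++ a :: c :: a :: l₂)
        = liftEnd q b₁ (c :: a :: l₂) := by
          rw [hb₁, ← liftEnd_append]; congr 1; simp
      _ = liftEnd q b₁ l₂ := by simp [liftEnd, ← hc1, hkey]
      _ = liftEnd q b (l₁ ++ a :: l₂) := by
          rw [hb₁, ← liftEnd_append]; congr 1; simp
  | deadEndInsert l₁ l₂ a c h =>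
    have hpre : (l₁ ++ [a]).Chain' HK.Adj ∧ (l₁ ++ [a]).head? = some (q b) := by
      constructor
      · have : l₁ ++ a :: l₂ = (l₁ ++ [a]) ++ l₂ := by simp
        rw [this, List.Chain', List.isChain_append] at hc
        exact hc.1
      · rw [List.head?_append] at hb ⊢
        cases l₁ <;> simpa using hb
    set b₁ := liftEnd q b (l₁ ++ [a]) with hb₁
    have hqb₁ : q b₁ = a := prefixFact l₁ a hpre.1 hpre.2
    have hcN : c ∈ closedNbhd HK (q b₁) := by rw [hqb₁]; exact mem_closedNbhd_of_adj h
    obtain ⟨hc1mem, hc1val⟩ := liftStep_spec hq hcN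
    set c1 := liftStep q b₁ c with hc1
    have hadjbc : HB.Adj b₁ c1 := liftStep_adj hq (by rw [hqb₁]; exact h)
    have hkey : liftStep q c1 a = b₁ :=
      liftStep_unique hq (mem_closedNbhd_of_adj hadjbc.symm) hqb₁
    calc liftEnd q b (l₁ ++ a :: l₂)
        = liftEnd q b₁ l₂ := by
          rw [hb₁, ← liftEnd_append]; congr 1; simp
      _ = liftEnd q b₁ (c :: a :: l₂) := by simp [liftEnd, ← hc1, hkey]
      _ = liftEnd q b (l₁ ++ a :: c :: a :: l₂) := by
          rw [hb₁, ← liftEnd_append]; congr 1; simp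

/-- Homotopy lifting: homotopic walks have the same lifted endpoint. -/
lemma liftEnd_homotopic (hq : IsTriangularCover q) {u u' : List VK} (h : Homotopic HK u u')
    (hc : u.Chain' HK.Adj) (b : VB) (hb : u.head? = some (q b)) :
    liftEnd q b u = liftEnd q b u' := by
  induction h with
  | refl => rfl
  | @tail m m' hm hmove ih =>
    have hcm : m.Chain' HK.Adj := Homotopic.chain' hm hc
    have hbm : m.head? = some (q b) := by rw [← Homotopic.head?_eq hm]; exact hb
    exact ih.trans (liftEnd_elemMove hq hmove hcm b hbm)

lemma cover_surjective (hq : IsTriangularCover q) : Function.Surjective q := by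
  obtain ⟨b₀⟩ := hq.connDom.nonempty
  have key : ∀ {x y : VK} (_ : HK.Walk x y), (∃ b, q b = x) → ∃ b, q b = y := by
    intro x y w
    induction w with
    | nil => exact id
    | cons hadj w ih =>
      rintro ⟨b, rfl⟩
      apply ih
      obtain ⟨x', hx'N, hx'val⟩ := hq.surjOn b (mem_closedNbhd_of_adj hadj)
      exact ⟨x', hx'val⟩
  intro k
  obtain ⟨w⟩ := hq.connCod.preconnected (q b₀) k
  exact key w ⟨b₀, rfl⟩

end Lifting
section Uniqueness

variable {VA VB VK : Type u} {HA : SimpleGraph VA} {HB : SimpleGraph VB} {HK : SimpleGraph VK}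

/-- The comparison map between two covers, defined by lifting walks. -/
noncomputable def transfer (q1 : HA →g HK) (q2 : HB →g HK) (hA : HA.Connected)
    (a₀ : VA) (b₀ : VB) : VA → VB :=
  fun a => liftEnd q2 b₀ (((hA.preconnected a₀ a).some).support.map q1)

variable {q1 : HA →g HK} {q2 : HB →g HK}

lemma support_map_chain' (q1 : HA →g HK) {x y : VA} (w : HA.Walk x y) :
    (w.support.map q1).Chain' HK.Adj := by
  rw [List.Chain', List.isChain_map]
  exact (w.isChain_adj_support).imp (fun _ _ h => q1.map_rel h)

lemma transfer_spec (hq2 : IsTriangularCover q2) (hsc1 : TriSimplyConnected HA)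
    {a₀ : VA} {b₀ : VB} (hb : q2 b₀ = q1 a₀) (a : VA) (w : HA.Walk a₀ a) :
    transfer q1 q2 hsc1.1 a₀ b₀ a = liftEnd q2 b₀ (w.support.map q1) := by
  set w0 := (hsc1.1.preconnected a₀ a).some with hw0
  have hhom : Homotopic HA w0.support w.support := by
    rw [w0.support_eq_cons, w.support_eq_cons]
    apply homotopic_of_same_ends hsc1
    · rw [← w0.support_eq_cons]; exact w0.isChain_adj_support
    · rw [← w.support_eq_cons]; exact w.isChain_adj_support
    · rw [← w0.support_eq_cons, ← w.support_eq_cons, walk_getLast?, walk_getLast?]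
  exact liftEnd_homotopic hq2 (map_homotopic q1 hhom) (support_map_chain' q1 w0) b₀
    (by rw [w0.support_eq_cons]; simp only [List.map_cons, List.head?_cons, hb])

lemma transfer_comm (hq2 : IsTriangularCover q2) (hsc1 : TriSimplyConnected HA)
    {a₀ : VA} {b₀ : VB} (hb : q2 b₀ = q1 a₀) (a : VA) :
    q2 (transfer q1 q2 hsc1.1 a₀ b₀ a) = q1 a := by
  set w0 := (hsc1.1.preconnected a₀ a).some with hw0
  have h := liftEnd_prefix_spec hq2 (P := w0.support.map q1)
    (by intro hnil; exact w0.support_ne_nil (by simpa using hnil)) (support_map_chain' q1 w0) (b := b₀)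
    (by rw [w0.support_eq_cons]; simp only [List.map_cons, List.head?_cons, hb])
  rw [List.getLast?_map, walk_getLast?] at h
  have : some (q1 a) = some (q2 (liftEnd q2 b₀ (w0.support.map q1))) := by simpa using h
  exact (Option.some_injective _ this).symm

lemma transfer_base (hq2 : IsTriangularCover q2) (hsc1 : TriSimplyConnected HA)
    {a₀ : VA} {b₀ : VB} (hb : q2 b₀ = q1 a₀) :
    transfer q1 q2 hsc1.1 a₀ b₀ a₀ = b₀ := by
  rw [transfer_spec hq2 hsc1 hb a₀ SimpleGraph.Walk.nil]
  show liftEnd q2 b₀ [q1 a₀] = b₀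
  rw [← hb]
  simp only [liftEnd, List.foldl_cons, List.foldl_nil, liftStep_self hq2]

lemma transfer_adj (hq2 : IsTriangularCover q2) (hsc1 : TriSimplyConnected HA)
    {a₀ : VA} {b₀ : VB} (hb : q2 b₀ = q1 a₀) {a a' : VA} (hadj : HA.Adj a a') :
    HB.Adj (transfer q1 q2 hsc1.1 a₀ b₀ a) (transfer q1 q2 hsc1.1 a₀ b₀ a') := by
  set w0 := (hsc1.1.preconnected a₀ a).some with hw0
  have h1 : transfer q1 q2 hsc1.1 a₀ b₀ a = liftEnd q2 b₀ (w0.support.map q1) :=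
    transfer_spec hq2 hsc1 hb a w0
  have h2 : transfer q1 q2 hsc1.1 a₀ b₀ a'
      = liftStep q2 (transfer q1 q2 hsc1.1 a₀ b₀ a) (q1 a') := by
    rw [transfer_spec hq2 hsc1 hb a' (w0.concat hadj), SimpleGraph.Walk.support_concat,
      List.map_append, liftEnd_append, ← h1]
    rfl
  rw [h2]
  apply liftStep_adj hq2
  rw [transfer_comm hq2 hsc1 hb]
  exact q1.map_rel hadj

lemma lifts_eq {VC : Type u} {HC : SimpleGraph VC} (hq2 : IsTriangularCover q2)
    {f g : VC → VB} (hf : ∀ {x y : VC}, HC.Adj x y → HB.Adj (f x) (f y))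
    (hg : ∀ {x y : VC}, HC.Adj x y → HB.Adj (g x) (g y))
    (hcomm : ∀ c, q2 (f c) = q2 (g c)) (hC : HC.Connected) (c₀ : VC) (h0 : f c₀ = g c₀) :
    ∀ c, f c = g c := by
  have key : ∀ {x y : VC} (_ : HC.Walk x y), f x = g x → f y = g y := by
    intro x y w
    induction w with
    | nil => exact id
    | @cons x x' y hadj w ih =>
      intro hx
      apply ih
      have h1 : f x' ∈ closedNbhd HB (f x) := mem_closedNbhd_of_adj (hf hadj)
      have h2 : g x' ∈ closedNbhd HB (f x) := by
        rw [hx]; exact mem_closedNbhd_of_adj (hg hadj)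
      exact hq2.injOn (f x) h1 h2 (hcomm x')
  intro c
  obtain ⟨w⟩ := hC.preconnected c₀ c
  exact key w h0

/-- Uniqueness of the universal (triangularly simply connected) cover. -/
theorem cover_iso (hq1 : IsTriangularCover q1) (hq2 : IsTriangularCover q2)
    (hsc1 : TriSimplyConnected HA) (hsc2 : TriSimplyConnected HB) :
    Nonempty (HA ≃g HB) := by
  obtain ⟨a₀⟩ := hq1.connDom.nonempty
  obtain ⟨b₀, hb₀⟩ := cover_surjective hq2 (q1 a₀)
  set f := transfer q1 q2 hsc1.1 a₀ b₀ with hf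
  set g := transfer q2 q1 hsc2.1 b₀ a₀ with hg
  have hb₀' : q1 a₀ = q2 b₀ := hb₀.symm
  have hfadj : ∀ {x y : VA}, HA.Adj x y → HB.Adj (f x) (f y) :=
    fun h => transfer_adj hq2 hsc1 hb₀ h
  have hgadj : ∀ {x y : VB}, HB.Adj x y → HA.Adj (g x) (g y) :=
    fun h => transfer_adj hq1 hsc2 hb₀' h
  have hgf : ∀ a, g (f a) = a := by
    apply lifts_eq hq1 (f := g ∘ f) (g := id)
      (fun h => hgadj (hfadj h)) (fun h => h) _ hq1.connDom a₀
    · show g (f a₀) = a₀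
      rw [hf, transfer_base hq2 hsc1 hb₀, hg, transfer_base hq1 hsc2 hb₀']
    · intro a
      show q1 (g (f a)) = q1 a
      rw [hg, transfer_comm hq1 hsc2 hb₀', hf, transfer_comm hq2 hsc1 hb₀]
  have hfg : ∀ b, f (g b) = b := by
    apply lifts_eq hq2 (f := f ∘ g) (g := id)
      (fun h => hfadj (hgadj h)) (fun h => h) _ hq2.connDom b₀
    · show f (g b₀) = b₀
      rw [hg, transfer_base hq1 hsc2 hb₀', hf, transfer_base hq2 hsc1 hb₀]
    · intro b
      show q2 (f (g b)) = q2 b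
      rw [hf, transfer_comm hq2 hsc1 hb₀, hg, transfer_comm hq1 hsc2 hb₀']
  refine ⟨⟨⟨f, g, hgf, hfg⟩, ?_⟩⟩
  intro a a'
  show HB.Adj (f a) (f a') ↔ HA.Adj a a'
  constructor
  · intro h
    have := hgadj h
    rwa [hgf, hgf] at this
  · exact hfadj

end Uniqueness
section TscClique

variable {V : Type u} {G : SimpleGraph V}

/-- A walk in the clique graph "lies over" a pseudo-walk in `G`: there is a monotone
staircase matching vertices to the cliques that contain them. -/
inductive Over (G : SimpleGraph V) : List V → List (CliqueVert G) → Prop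
  | single {x : V} {R : CliqueVert G} : x ∈ R.1 → Over G [x] [R]
  | consV {x y : V} {R : CliqueVert G} {s : List V} {W : List (CliqueVert G)} :
      x ∈ R.1 → Over G (y :: s) (R :: W) → Over G (x :: y :: s) (R :: W)
  | consW {x : V} {R S : CliqueVert G} {s : List V} {W : List (CliqueVert G)} :
      x ∈ R.1 → Over G (x :: s) (S :: W) → Over G (x :: s) (R :: S :: W)

lemma Over.head_mem' {s : List V} {W : List (CliqueVert G)} (h : Over G s W) :
    ∀ {x : V} {R : CliqueVert G}, s.head? = some x → W.head? = some R → x ∈ R.1 := by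
  induction h with
  | single hx =>
    intro x R hx' hR'
    obtain rfl : _ = x := by simpa using hx'
    obtain rfl : _ = R := by simpa using hR'
    exact hx
  | consV hx _ _ =>
    intro x' R' hx' hR'
    obtain rfl : _ = x' := by simpa using hx'
    obtain rfl : _ = R' := by simpa using hR'
    exact hx
  | consW hx _ _ =>
    intro x' R' hx' hR'
    obtain rfl : _ = x' := by simpa using hx'
    obtain rfl : _ = R' := by simpa using hR'
    exact hx

lemma Over.decomp {x : V} {s : List V} {W : List (CliqueVert G)} (h : Over G (x :: s) W) :
    ∃ R W₂, W = R :: W₂ ∧ x ∈ R.1 := by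
  cases W with
  | nil => cases h
  | cons R W₂ => exact ⟨R, W₂, rfl, h.head_mem' rfl rfl⟩

lemma Over.chainE {s : List V} {W : List (CliqueVert G)} (h : Over G s W) :
    s.Chain' (fun a b => a = b ∨ G.Adj a b) := by
  induction h with
  | single _ => simp [List.Chain']
  | @consV x y R s W hx hinner ih =>
    have hy : y ∈ R.1 := hinner.head_mem' rfl rfl
    exact List.isChain_cons_cons.mpr ⟨adj_or_eq_of_isClique R.2.1 hx hy, ih⟩
  | consW _ _ ih => exact ih

lemma Over.mem_of_const {x : V} {s : List V} {W : List (CliqueVert G)} (h : Over G s W)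
    (hs : ∀ y ∈ s, y = x) : ∀ R ∈ W, x ∈ R.1 := by
  induction h with
  | @single y Q hy =>
    intro R hR
    have h1 : y = x := hs _ (by simp)
    have h2 : R = Q := by simpa using hR
    rw [h2, ← h1]
    exact hy
  | @consV z y R s W hz hinner ih =>
    intro R' hR'
    exact ih (fun w hw => hs w (by simp [hw])) R' hR'
  | @consW z R S s W hz hinner ih =>
    intro R' hR'
    rcases List.mem_cons.mp hR' with rfl | hR'
    · have := hs z (by simp)
      exact this ▸ hz
    · exact ih hs R' hR'

/-- Front moves on pseudo-walks: the elementary moves together with stuttering moves,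
localized at the head. -/
inductive FrontMove (G : SimpleGraph V) : List V → List V → Prop
  | dup (x : V) (v : List V) : FrontMove G (x :: v) (x :: x :: v)
  | undup (x : V) (v : List V) : FrontMove G (x :: x :: v) (x :: v)
  | triR (x b c : V) (v : List V) (h₁ : G.Adj x b) (h₂ : G.Adj b c) (h₃ : G.Adj x c) :
      FrontMove G (x :: b :: c :: v) (x :: c :: v)
  | triI (x b c : V) (v : List V) (h₁ : G.Adj x b) (h₂ : G.Adj b c) (h₃ : G.Adj x c) :
      FrontMove G (x :: c :: v) (x :: b :: c :: v)
  | deR (x b : V) (v : List V) (h : G.Adj x b) : FrontMove G (x :: b :: x :: v) (x :: v)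
  | deI (x b : V) (v : List V) (h : G.Adj x b) : FrontMove G (x :: v) (x :: b :: x :: v)

/-- Generalized elementary moves on pseudo-walks. -/
inductive EMove (G : SimpleGraph V) : List V → List V → Prop
  | mk (u : List V) {t t' : List V} : FrontMove G t t' → EMove G (u ++ t) (u ++ t')

lemma FrontMove.ne_nil {t t' : List V} (h : FrontMove G t t') : t ≠ [] ∧ t' ≠ [] := by
  cases h <;> simp

lemma elemMove_emove {l l' : List V} (h : ElemMove G l l') : EMove G l l' := by
  cases h with
  | triRemove l₁ l₂ a b c h₁ h₂ h₃ => exact EMove.mk l₁ (FrontMove.triR a b c l₂ h₁ h₂ h₃)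
  | triInsert l₁ l₂ a b c h₁ h₂ h₃ => exact EMove.mk l₁ (FrontMove.triI a b c l₂ h₁ h₂ h₃)
  | deadEndRemove l₁ l₂ a b h => exact EMove.mk l₁ (FrontMove.deR a b l₂ h)
  | deadEndInsert l₁ l₂ a b h => exact EMove.mk l₁ (FrontMove.deI a b l₂ h)

/-- Decomposition of a staircase along an initial run of a fixed vertex `b`. -/
lemma over_bRun {b x : V} {v : List V} {L : List (CliqueVert G)}
    (h : Over G (b :: x :: v) L) :
    ∃ (run : List (CliqueVert G)) (P' : CliqueVert G) (rest : List (CliqueVert G)),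
      L = run ++ P' :: rest ∧ (∀ T ∈ run, b ∈ T.1) ∧ b ∈ P'.1 ∧ x ∈ P'.1 ∧
      Over G (x :: v) (P' :: rest) := by
  generalize hs : (b :: x :: v : List V) = s at h
  induction h with
  | single _ => simp at hs
  | @consV x₀ y R s W hx₀ hinner ih =>
    obtain ⟨rfl, rfl, rfl⟩ : x₀ = b ∧ y = x ∧ s = v := by
      injection hs.symm with h1 h2; injection h2 with h2 h3; exact ⟨h1, h2, h3⟩
    exact ⟨[], R, W, rfl, by simp, hx₀, hinner.head_mem' rfl rfl, hinner⟩
  | @consW x₀ R S s W hx₀ hinner ih =>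
    obtain ⟨rfl, -⟩ : x₀ = b ∧ s = x :: v := by
      injection hs.symm with h1 h2; exact ⟨h1, h2⟩
    obtain ⟨run, P', rest, hL, hrun, hbP, hxP, hov⟩ := ih hs
    refine ⟨R :: run, P', rest, by rw [hL, List.cons_append], ?_, hbP, hxP, hov⟩
    intro T hT
    rcases List.mem_cons.mp hT with rfl | hT
    · exact hx₀
    · exact hrun T hT

lemma exists_clique_pair {x b : V} (h : G.Adj x b) :
    ∃ T : CliqueVert G, x ∈ T.1 ∧ b ∈ T.1 := by
  obtain ⟨t, ht, hsub⟩ := exists_maxClique_superset {x, b} (isClique_pair_of_adj h)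
  exact ⟨⟨t, ht⟩, hsub (by simp), hsub (by simp)⟩

lemma isClique_triple {x b c : V} (h₁ : G.Adj x b) (h₂ : G.Adj b c) (h₃ : G.Adj x c) :
    G.IsClique {x, b, c} := by
  intro p hp q hq hne
  simp only [Set.mem_insert_iff, Set.mem_singleton_iff] at hp hq
  rcases hp with rfl | rfl | rfl <;> rcases hq with rfl | rfl | rfl <;>
    first
      | exact absurd rfl hne
      | exact h₁ | exact h₁.symm | exact h₂ | exact h₂.symm | exact h₃ | exact h₃.symm

lemma exists_clique_triple {x b c : V} (h₁ : G.Adj x b) (h₂ : G.Adj b c) (h₃ : G.Adj x c) :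
    ∃ D : CliqueVert G, x ∈ D.1 ∧ b ∈ D.1 ∧ c ∈ D.1 := by
  obtain ⟨t, ht, hsub⟩ := exists_maxClique_superset {x, b, c} (isClique_triple h₁ h₂ h₃)
  exact ⟨⟨t, ht⟩, hsub (by simp), hsub (by simp), hsub (by simp)⟩

/-- Contract an initial cone run in the clique graph. -/
lemma cone_step {b : V} {R P' : CliqueVert G} {run₂ rest : List (CliqueVert G)}
    (hchain : ((R :: run₂) ++ P' :: rest).Chain' (cliqueGraph G).Adj)
    (hrun : ∀ T ∈ R :: run₂, b ∈ T.1) (hbP : b ∈ P'.1) :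
    (R = P' → Homotopic (cliqueGraph G) ((R :: run₂) ++ P' :: rest) (R :: rest)) ∧
    (R ≠ P' → Homotopic (cliqueGraph G) ((R :: run₂) ++ P' :: rest) (R :: P' :: rest)) := by
  have hassoc : (R :: run₂) ++ P' :: rest = (R :: (run₂ ++ [P'])) ++ rest := by simp
  have hsegchain : (R :: (run₂ ++ [P'])).Chain' (cliqueGraph G).Adj := by
    rw [hassoc, List.Chain', List.isChain_append] at hchain
    exact hchain.1
  have hsegmem : ∀ T ∈ R :: (run₂ ++ [P']), b ∈ T.1 := by
    intro T hT
    rcases List.mem_cons.mp hT with rfl | hT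
    · exact hrun T (by simp)
    · rcases List.mem_append.mp hT with hT | hT
      · exact hrun T (by simp [hT])
      · rw [List.mem_singleton.mp hT]; exact hbP
  have hseglast : (R :: (run₂ ++ [P'])).getLast? = some P' := by
    show ((R :: run₂) ++ [P']).getLast? = some P'
    rw [List.getLast?_append]; rfl
  constructor
  · intro hRP
    have hcone := homotopic_cone_closed b (run₂ ++ [P']) R hsegchain hsegmem (hRP ▸ hseglast)
    have := hcone.context [] rest
    rw [hassoc]
    simpa using this
  · intro hRP
    have hcone := homotopic_cone_open b (run₂ ++ [P']) R P' hsegchain hsegmem hseglast hRP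
    have := hcone.context [] rest
    rw [hassoc]
    simpa using this

lemma front_dup {x : V} {v : List V} {W : List (CliqueVert G)} (h : Over G (x :: v) W) :
    Over G (x :: x :: v) W := by
  obtain ⟨R, W₂, rfl, hx⟩ := h.decomp
  exact Over.consV hx h

lemma front_undup {x : V} {v : List V} {W : List (CliqueVert G)} (h : Over G (x :: x :: v) W) :
    Over G (x :: v) W := by
  generalize hs : (x :: x :: v : List V) = s at h
  induction h with
  | single _ => simp at hs
  | @consV x₀ y R s W hx hinner ih =>
    obtain ⟨rfl, rfl, rfl⟩ : x₀ = x ∧ y = x ∧ s = v := by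
      injection hs.symm with h1 h2; injection h2 with h2 h3; exact ⟨h1, h2, h3⟩
    exact hinner
  | @consW x₀ R S s W hx hinner ih =>
    obtain rfl : x₀ = x := by
      have := congrArg List.head? hs
      simpa using this.symm
    exact Over.consW hx (ih hs)

lemma front_deI {x b : V} (hxb : G.Adj x b) {v : List V} {W : List (CliqueVert G)}
    (h : Over G (x :: v) W) :
    ∃ W', Over G (x :: b :: x :: v) W' ∧ Homotopic (cliqueGraph G) W W' := by
  obtain ⟨R, W₂, rfl, hx⟩ := h.decomp
  obtain ⟨T, hxT, hbT⟩ := exists_clique_pair hxb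
  by_cases hTR : T = R
  · subst hTR
    exact ⟨T :: W₂, Over.consV hx (Over.consV hbT h), Homotopic.refl _⟩
  · have hadjRT : (cliqueGraph G).Adj R T := ⟨fun e => hTR e.symm, x, hx, hxT⟩
    refine ⟨R :: T :: R :: W₂, ?_, ?_⟩
    · exact Over.consW hx (Over.consV hxT (Over.consV hbT (Over.consW hxT h)))
    · exact Homotopic.of_move (by simpa using ElemMove.deadEndInsert [] W₂ R T hadjRT)

lemma front_deR {x b : V} {v : List V} {W : List (CliqueVert G)}
    (h : Over G (x :: b :: x :: v) W) (hc : W.Chain' (cliqueGraph G).Adj) :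
    ∃ W', Over G (x :: v) W' ∧ Homotopic (cliqueGraph G) W W' := by
  generalize hs : (x :: b :: x :: v : List V) = s at h
  revert hc
  induction h with
  | single _ => simp at hs
  | @consV x₀ y R s W hx hinner ih =>
    intro hc
    obtain ⟨rfl, rfl, rfl⟩ : x₀ = x ∧ y = b ∧ s = x :: v := by
      injection hs.symm with h1 h2; injection h2 with h2 h3; exact ⟨h1, h2, h3⟩
    obtain ⟨run, P', rest, hL, hrun, hbP, hxP, hov⟩ := over_bRun hinner
    cases run with
    | nil =>
      obtain ⟨rfl, rfl⟩ : R = P' ∧ W = rest := by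
        injection hL with h1 h2; exact ⟨h1, h2⟩
      exact ⟨R :: W, hov, Homotopic.refl _⟩
    | cons Q run₂ =>
      obtain ⟨hQR, hW⟩ : Q = R ∧ W = run₂ ++ P' :: rest := by
        injection hL with h1 h2; exact ⟨h1.symm, h2⟩
      subst hQR
      have hchain2 : ((Q :: run₂) ++ P' :: rest).Chain' (cliqueGraph G).Adj := by
        rw [List.cons_append, ← hW]; exact hc
      obtain ⟨hclosed, hopen⟩ := cone_step hchain2 (fun T hT => hrun T hT) hbP
      by_cases hRP : Q = P'
      · refine ⟨Q :: rest, ?_, ?_⟩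
        · rw [hRP]; exact hov
        · rw [hW, ← List.cons_append]; exact hclosed hRP
      · refine ⟨Q :: P' :: rest, Over.consW hx hov, ?_⟩
        rw [hW, ← List.cons_append]; exact hopen hRP
  | @consW x₀ R S s W hx hinner ih =>
    intro hc
    obtain rfl : x₀ = x := by
      have := congrArg List.head? hs
      simpa using this.symm
    obtain ⟨W'', hov'', hhom''⟩ := ih hs (List.isChain_cons_cons.mp hc).2
    obtain ⟨W₄, rfl⟩ : ∃ W₄, W'' = S :: W₄ := by
      have := hhom''.head?_eq
      cases W'' with
      | nil => simp at this
      | cons S' W₄ =>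
        obtain rfl : S = S' := by simpa using this
        exact ⟨W₄, rfl⟩
    exact ⟨R :: S :: W₄, Over.consW hx hov'', by simpa using hhom''.context [R] []⟩
lemma front_triR {x b c : V} (h₁ : G.Adj x b) (h₂ : G.Adj b c) (h₃ : G.Adj x c)
    {v : List V} {W : List (CliqueVert G)}
    (h : Over G (x :: b :: c :: v) W) (hc : W.Chain' (cliqueGraph G).Adj) :
    ∃ W', Over G (x :: c :: v) W' ∧ Homotopic (cliqueGraph G) W W' := by
  generalize hs : (x :: b :: c :: v : List V) = s at h
  revert hc
  induction h with
  | single _ => simp at hs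
  | @consV x₀ y R s W hx hinner ih =>
    intro hc
    obtain ⟨rfl, rfl, rfl⟩ : x₀ = x ∧ y = b ∧ s = c :: v := by
      injection hs.symm with e1 e2; injection e2 with e2 e3; exact ⟨e1, e2, e3⟩
    obtain ⟨run, P', rest, hL, hrun, hbP, hcP, hov⟩ := over_bRun hinner
    cases run with
    | nil =>
      obtain ⟨rfl, rfl⟩ : R = P' ∧ W = rest := by
        injection hL with e1 e2; exact ⟨e1, e2⟩
      exact ⟨R :: W, Over.consV hx hov, Homotopic.refl _⟩
    | cons Q run₂ =>
      obtain ⟨hQR, hW⟩ : Q = R ∧ W = run₂ ++ P' :: rest := by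
        injection hL with e1 e2; exact ⟨e1.symm, e2⟩
      subst hQR
      have hchain2 : ((Q :: run₂) ++ P' :: rest).Chain' (cliqueGraph G).Adj := by
        rw [List.cons_append, ← hW]; exact hc
      obtain ⟨hclosed, hopen⟩ := cone_step hchain2 (fun T hT => hrun T hT) hbP
      by_cases hRP : Q = P'
      · refine ⟨Q :: rest, Over.consV hx (by rw [hRP]; exact hov), ?_⟩
        rw [hW, ← List.cons_append]; exact hclosed hRP
      · have hhomW₀ := hopen hRP
        have hchainW₀ := Homotopic.chain' hhomW₀ hchain2
        have hQP' : (cliqueGraph G).Adj Q P' := (List.isChain_cons_cons.mp hchainW₀).1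
        by_cases hcR : c ∈ Q.1
        · refine ⟨Q :: P' :: rest, Over.consV hx (Over.consW hcR hov), ?_⟩
          rw [hW, ← List.cons_append]; exact hhomW₀
        · by_cases hxP : x₀ ∈ P'.1
          · refine ⟨Q :: P' :: rest, Over.consW hx (Over.consV hxP hov), ?_⟩
            rw [hW, ← List.cons_append]; exact hhomW₀
          · obtain ⟨T, hxT, hcT⟩ := exists_clique_pair h₃
            have hTQ : T ≠ Q := fun e => hcR (e ▸ hcT)
            have hTP : T ≠ P' := fun e => hxP (e ▸ hxT)
            have hadjQT : (cliqueGraph G).Adj Q T := ⟨fun e => hTQ e.symm, x₀, hx, hxT⟩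
            have hadjTP : (cliqueGraph G).Adj T P' := ⟨hTP, c, hcT, hcP⟩
            refine ⟨Q :: T :: P' :: rest,
              Over.consW hx (Over.consV hxT (Over.consW hcT hov)), ?_⟩
            rw [hW, ← List.cons_append]
            refine hhomW₀.trans (Homotopic.of_move ?_)
            simpa using ElemMove.triInsert [] rest Q T P' hadjQT hadjTP hQP'
  | @consW x₀ R S s W hx hinner ih =>
    intro hc
    obtain rfl : x₀ = x := by
      have := congrArg List.head? hs
      simpa using this.symm
    obtain ⟨W'', hov'', hhom''⟩ := ih hs (List.isChain_cons_cons.mp hc).2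
    obtain ⟨W₄, rfl⟩ : ∃ W₄, W'' = S :: W₄ := by
      have := hhom''.head?_eq
      cases W'' with
      | nil => simp at this
      | cons S' W₄ =>
        obtain rfl : S = S' := by simpa using this
        exact ⟨W₄, rfl⟩
    exact ⟨R :: S :: W₄, Over.consW hx hov'', by simpa using hhom''.context [R] []⟩

lemma front_triI {x b c : V} (h₁ : G.Adj x b) (h₂ : G.Adj b c) (h₃ : G.Adj x c)
    {v : List V} {W : List (CliqueVert G)}
    (h : Over G (x :: c :: v) W) (hc : W.Chain' (cliqueGraph G).Adj) :
    ∃ W', Over G (x :: b :: c :: v) W' ∧ Homotopic (cliqueGraph G) W W' := by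
  generalize hs : (x :: c :: v : List V) = s at h
  revert hc
  induction h with
  | single _ => simp at hs
  | @consV x₀ y R s W hx hinner ih =>
    intro hc
    obtain ⟨rfl, rfl, rfl⟩ : x₀ = x ∧ y = c ∧ s = v := by
      injection hs.symm with e1 e2; injection e2 with e2 e3; exact ⟨e1, e2, e3⟩
    obtain ⟨D, hxD, hbD, hcD⟩ := exists_clique_triple h₁ h₂ h₃
    by_cases hDR : D = R
    · subst hDR
      exact ⟨D :: W, Over.consV hx (Over.consV hbD hinner), Homotopic.refl _⟩
    · have hadjRD : (cliqueGraph G).Adj R D := ⟨fun e => hDR e.symm, x₀, hx, hxD⟩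
      refine ⟨R :: D :: R :: W,
        Over.consW hx (Over.consV hxD (Over.consV hbD (Over.consW hcD hinner))), ?_⟩
      exact Homotopic.of_move (by simpa using ElemMove.deadEndInsert [] W R D hadjRD)
  | @consW x₀ R S s W hx hinner ih =>
    intro hc
    obtain rfl : x₀ = x := by
      have := congrArg List.head? hs
      simpa using this.symm
    obtain ⟨W'', hov'', hhom''⟩ := ih hs (List.isChain_cons_cons.mp hc).2
    obtain ⟨W₄, rfl⟩ : ∃ W₄, W'' = S :: W₄ := by
      have := hhom''.head?_eq
      cases W'' with
      | nil => simp at this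
      | cons S' W₄ =>
        obtain rfl : S = S' := by simpa using this
        exact ⟨W₄, rfl⟩
    exact ⟨R :: S :: W₄, Over.consW hx hov'', by simpa using hhom''.context [R] []⟩

lemma front_dispatch {t t' : List V} (hm : FrontMove G t t') {W : List (CliqueVert G)}
    (h : Over G t W) (hc : W.Chain' (cliqueGraph G).Adj) :
    ∃ W', Over G t' W' ∧ Homotopic (cliqueGraph G) W W' := by
  cases hm with
  | dup x v => exact ⟨W, front_dup h, Homotopic.refl _⟩
  | undup x v => exact ⟨W, front_undup h, Homotopic.refl _⟩
  | triR x b c v h₁ h₂ h₃ => exact front_triR h₁ h₂ h₃ h hc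
  | triI x b c v h₁ h₂ h₃ => exact front_triI h₁ h₂ h₃ h hc
  | deR x b v hadj => exact front_deR h hc
  | deI x b v hadj => exact ⟨_, (front_deI hadj h).choose_spec.1, (front_deI hadj h).choose_spec.2⟩

/-- Transport of staircases along a generalized elementary move. -/
lemma over_move {s : List V} {W : List (CliqueVert G)} (h : Over G s W) :
    ∀ (_ : W.Chain' (cliqueGraph G).Adj) (u t t' : List V), s = u ++ t → FrontMove G t t' →
      ∃ W', Over G (u ++ t') W' ∧ Homotopic (cliqueGraph G) W W' := by
  induction h with
  | @single y R hy =>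
    intro hc u t t' hs hm
    cases u with
    | nil =>
      obtain rfl : t = [y] := by simpa using hs.symm
      simpa using front_dispatch hm (Over.single hy) hc
    | cons z u₂ =>
      exfalso
      have : u₂ ++ t = [] := by injection hs with e1 e2; exact e2.symm
      exact hm.ne_nil.1 (List.append_eq_nil_iff.mp this).2
  | @consV x y R s W hx hinner ih =>
    intro hc u t t' hs hm
    cases u with
    | nil =>
      obtain rfl : t = x :: y :: s := by simpa using hs.symm
      simpa using front_dispatch hm (Over.consV hx hinner) hc
    | cons z u₂ =>
      obtain ⟨rfl, h2⟩ : x = z ∧ y :: s = u₂ ++ t := by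
        injection hs with e1 e2; exact ⟨e1, e2⟩
      obtain ⟨W'', hov, hhom⟩ := ih hc u₂ t t' h2 hm
      obtain ⟨W₄, rfl⟩ : ∃ W₄, W'' = R :: W₄ := by
        have := hhom.head?_eq
        cases W'' with
        | nil => simp at this
        | cons R' W₄ =>
          obtain rfl : R = R' := by simpa using this
          exact ⟨W₄, rfl⟩
      obtain ⟨y', s₃, he⟩ := List.exists_cons_of_ne_nil
        (show u₂ ++ t' ≠ [] from fun e => hm.ne_nil.2 (List.append_eq_nil_iff.mp e).2)
      refine ⟨R :: W₄, ?_, hhom⟩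
      rw [List.cons_append, he]
      exact Over.consV hx (he ▸ hov)
  | @consW x R S s W hx hinner ih =>
    intro hc u t t' hs hm
    cases u with
    | nil =>
      obtain rfl : t = x :: s := by simpa using hs.symm
      simpa using front_dispatch hm (Over.consW hx hinner) hc
    | cons z u₂ =>
      obtain ⟨rfl, h2⟩ : x = z ∧ s = u₂ ++ t := by
        injection hs with e1 e2; exact ⟨e1, e2⟩
      obtain ⟨W'', hov, hhom⟩ := ih (List.isChain_cons_cons.mp hc).2 (x :: u₂) t t'
        (by rw [List.cons_append, h2]) hm
      obtain ⟨W₄, rfl⟩ : ∃ W₄, W'' = S :: W₄ := by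
        have := hhom.head?_eq
        cases W'' with
        | nil => simp at this
        | cons S' W₄ =>
          obtain rfl : S = S' := by simpa using this
          exact ⟨W₄, rfl⟩
      refine ⟨R :: S :: W₄, ?_, by simpa using hhom.context [R] []⟩
      have := Over.consW (S := S) (W := W₄) hx (by rw [List.cons_append] at hov; exact hov)
      rw [List.cons_append]
      exact this
lemma over_moves {s s' : List V} (hm : Relation.ReflTransGen (EMove G) s s')
    {W : List (CliqueVert G)} (h : Over G s W) (hc : W.Chain' (cliqueGraph G).Adj) :
    ∃ W', Over G s' W' ∧ Homotopic (cliqueGraph G) W W' := by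
  induction hm with
  | refl => exact ⟨W, h, Homotopic.refl _⟩
  | @tail m m' hm hmove ih =>
    obtain ⟨W₂, hov₂, hhom₂⟩ := ih
    have hc₂ : W₂.Chain' (cliqueGraph G).Adj := hhom₂.chain' hc
    cases hmove with
    | mk u fm =>
      obtain ⟨W', hov', hhom'⟩ := over_move hov₂ hc₂ u _ _ rfl fm
      exact ⟨W', hov', hhom₂.trans hhom'⟩

lemma EMove.cons (z : V) {l l' : List V} (h : EMove G l l') : EMove G (z :: l) (z :: l') := by
  cases h with
  | mk u fm =>
    have := EMove.mk (z :: u) fm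
    simpa using this

lemma emove_dedup : ∀ (l : List V), l.Chain' (fun a b => a = b ∨ G.Adj a b) →
    ∃ l', Relation.ReflTransGen (EMove G) l l' ∧ l'.Chain' G.Adj ∧
      l.head? = l'.head? ∧ l.getLast? = l'.getLast? := by
  intro l
  induction l with
  | nil => exact fun _ => ⟨[], Relation.ReflTransGen.refl, by simp [List.Chain'], rfl, rfl⟩
  | cons x l ih =>
    intro hc
    cases l with
    | nil => exact ⟨[x], Relation.ReflTransGen.refl, by simp [List.Chain'], rfl, rfl⟩
    | cons y rest =>
      have hxy : x = y ∨ G.Adj x y := (List.isChain_cons_cons.mp hc).1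
      obtain ⟨l'', hrtg, hchain, hhead, hlast⟩ := ih (List.isChain_cons_cons.mp hc).2
      obtain ⟨l₃, rfl⟩ : ∃ l₃, l'' = y :: l₃ := by
        cases l'' with
        | nil => simp at hhead
        | cons y' l₃ =>
          obtain rfl : y = y' := by simpa using hhead
          exact ⟨l₃, rfl⟩
      rcases hxy with rfl | hadj
      · refine ⟨x :: l₃, ?_, hchain, rfl, by rwa [List.getLast?_cons_cons]⟩
        have hstep : EMove G (x :: x :: rest) (x :: rest) := by
          simpa using EMove.mk [] (FrontMove.undup x rest)
        exact Relation.ReflTransGen.head hstep hrtg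
      · refine ⟨x :: y :: l₃, ?_, List.isChain_cons_cons.mpr ⟨hadj, hchain⟩, rfl, ?_⟩
        · exact Relation.ReflTransGen.lift (fun m => x :: m) (fun _ _ hm => hm.cons x) _ _ hrtg
        · rw [List.getLast?_cons_cons, List.getLast?_cons_cons]
          exact hlast
      
lemma exists_walk_over :
    ∀ (L : List (CliqueVert G)) (R : CliqueVert G), (R :: L).Chain' (cliqueGraph G).Adj →
      ∀ (Z : CliqueVert G) (z y : V), (R :: L).getLast? = some Z → z ∈ Z.1 → y ∈ R.1 →
      ∃ s : List V, Over G (y :: (s ++ [z])) (R :: L) := by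
  intro L
  induction L with
  | nil =>
    intro R _ Z z y hZ hz hy
    obtain rfl : R = Z := by simpa using hZ
    exact ⟨[], Over.consV hy (Over.single hz)⟩
  | cons S L' ih =>
    intro R hc Z z y hZ hz hy
    have hadj : (cliqueGraph G).Adj R S := (List.isChain_cons_cons.mp hc).1
    obtain ⟨y', hy'R, hy'S⟩ := hadj.2
    obtain ⟨s', hov⟩ := ih S (List.isChain_cons_cons.mp hc).2 Z z y'
      (by rwa [List.getLast?_cons_cons] at hZ) hz hy'S
    refine ⟨y' :: s', ?_⟩
    rw [List.cons_append]
    exact Over.consV hy (Over.consW hy'R hov)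

theorem tsc_cliqueGraph {V : Type u} {G : SimpleGraph V} (h : TriSimplyConnected G) :
    TriSimplyConnected (cliqueGraph G) := by
  refine ⟨cliqueGraph_connected h.1, ?_⟩
  intro R₀ L hchain hlast
  cases L with
  | nil => exact Homotopic.refl _
  | cons S L' =>
    have : Nonempty V := h.1.nonempty
    obtain ⟨x₀, hx₀⟩ := maxClique_nonempty R₀.2
    have hlast? : (R₀ :: S :: L').getLast? = some R₀ := by
      rw [List.getLast?_eq_getLast (List.cons_ne_nil _ _), hlast]
    obtain ⟨s, hov⟩ := exists_walk_over (S :: L') R₀ hchain R₀ x₀ x₀ hlast? hx₀ hx₀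
    have hchainE := hov.chainE
    have hwlast : (x₀ :: (s ++ [x₀])).getLast? = some x₀ := by
      rw [show x₀ :: (s ++ [x₀]) = (x₀ :: s) ++ [x₀] by simp, List.getLast?_append]
      rfl
    obtain ⟨l', hrtg, hchain', hhead', hlast'⟩ := emove_dedup _ hchainE
    obtain ⟨l₃, rfl⟩ : ∃ l₃, l' = x₀ :: l₃ := by
      cases l' with
      | nil => simp at hhead'
      | cons z l₃ =>
        obtain rfl : x₀ = z := by simpa using hhead'
        exact ⟨l₃, rfl⟩
    have hlastx : (x₀ :: l₃).getLast (List.cons_ne_nil _ _) = x₀ := by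
      have := List.getLast?_eq_getLast (l := x₀ :: l₃) (List.cons_ne_nil _ _)
      rw [this] at hlast'
      exact (Option.some_injective _ (hwlast ▸ hlast'.symm : _ = some x₀))
    have hnull : Homotopic G (x₀ :: l₃) [x₀] := h.2 x₀ l₃ hchain' hlastx
    have hrtg2 : Relation.ReflTransGen (EMove G) (x₀ :: (s ++ [x₀])) [x₀] :=
      hrtg.trans (Relation.ReflTransGen.mono (fun _ _ hm => elemMove_emove hm) _ _ hnull)
    obtain ⟨W', hov', hhom'⟩ := over_moves hrtg2 hov hchain
    have hchainW' := hhom'.chain' hchain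
    have hmemW' : ∀ R ∈ W', x₀ ∈ R.1 := hov'.mem_of_const (by simp)
    obtain ⟨W₄, rfl⟩ : ∃ W₄, W' = R₀ :: W₄ := by
      have := hhom'.head?_eq
      cases W' with
      | nil => simp at this
      | cons R' W₄ =>
        obtain rfl : R₀ = R' := by simpa using this
        exact ⟨W₄, rfl⟩
    have hlastW' : (R₀ :: W₄).getLast? = some R₀ := by
      rw [← hhom'.getLast?_eq]
      exact hlast?
    exact hhom'.trans (homotopic_cone_closed x₀ W₄ R₀ hchainW' hmemW' hlastW')

end TscClique
section Assembly

lemma cover_comp_iso {VH VK1 VK2 : Type u} {H : SimpleGraph VH} {K1 : SimpleGraph VK1}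
    {K2 : SimpleGraph VK2} (q : H →g K1) (hq : IsTriangularCover q) (e : K1 ≃g K2) :
    IsTriangularCover (e.toHom.comp q) := by
  constructor
  · exact hq.connDom
  · rw [SimpleGraph.connected_iff]
    refine ⟨?_, ⟨e (Classical.choice hq.connCod.nonempty)⟩⟩
    intro x y
    have := hq.connCod.preconnected (e.symm x) (e.symm y)
    have h2 := this.map e.toHom
    simpa using h2
  · intro v x hx y hy hxy
    have : q x = q y := e.injective (by simpa using hxy)
    exact hq.injOn v hx hy this
  · intro v y hy
    have hy' : e.symm y ∈ closedNbhd K1 (q v) := by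
      rcases closedNbhd_cases hy with rfl | hadj
      · have : e.symm (e.toHom.comp q v) = q v := by simp
        rw [this]; exact mem_closedNbhd_self _
      · apply mem_closedNbhd_of_adj
        have := e.symm.map_rel_iff.mpr hadj
        simpa using this
    obtain ⟨x, hxN, hx⟩ := hq.surjOn v hy'
    refine ⟨x, hxN, ?_⟩
    show e (q x) = y
    rw [hx]
    simp
  · intro v x y hx hy hxy
    apply hq.reflectAdj v x y hx hy
    exact e.map_rel_iff.mp hxy

lemma iter_cover {V' V : Type u} {G' : SimpleGraph V'} {G : SimpleGraph V}
    (p : G' →g G) (hp : IsTriangularCover p) (hsc : TriSimplyConnected G') :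
    ∀ n : ℕ, ∃ q : (kStep^[n] ⟨V', G'⟩).graph →g (kStep^[n] ⟨V, G⟩).graph,
      IsTriangularCover q ∧ TriSimplyConnected (kStep^[n] ⟨V', G'⟩).graph := by
  intro n
  induction n with
  | zero => exact ⟨p, hp, hsc⟩
  | succ n ih =>
    obtain ⟨q, hq, hs⟩ := ih
    rw [Function.iterate_succ_apply', Function.iterate_succ_apply']
    exact ⟨coverCliqueHom q hq, coverCliqueHom_isCover q hq, tsc_cliqueGraph hs⟩

end Assembly
/-- If a connected graph is clique convergent, then so is its universal triangular cover. -/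
theorem universalCover_cliqueConvergent {V' V : Type u} {G' : SimpleGraph V'}
    {G : SimpleGraph V} (p : G' →g G) (hp : IsTriangularCover p)
    (hsc : TriSimplyConnected G') (hG : G.Connected)
    (hconv : CliqueConvergent G) : CliqueConvergent G' := by
  obtain ⟨n, m, hnm, ⟨φ⟩⟩ := hconv
  obtain ⟨qn, hqn, hsn⟩ := iter_cover p hp hsc n
  obtain ⟨qm, hqm, hsm⟩ := iter_cover p hp hsc m
  exact ⟨n, m, hnm, cover_iso (cover_comp_iso qn hqn φ) hqm hsn hsm⟩
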